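/- For any real ñ₁ with ñ₁ ≥ 160 (corresponding to ñ₁ ≥ 1.6ℓ with ℓ ≥ 100) and any integer T ≥ 2, G₁(T)·(1 − 1.6/ñ₁)^{ñ₁} + 1.6·G₂(T)·(1 − 1.6/ñ₁)^{ñ₁−1} < 6T − 4, where G₁(T) = (1 + 6T) − 7·(0.4751)^{T−1} > 0 and G₂(T) = (1 + 6T) − 7·(0.7981)^{T−1} > 0. -/
import Mathlib


lemma exp_neg_16_lt : Real.exp (-1.6) < 0.202 := by
  have h6 : (1.822048 : ℝ) ≤ Real.exp 0.6 := by
    have := Real.sum_le_exp_of_nonneg (by norm_num : (0:ℝ) ≤ 0.6) 6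
    simp [Finset.sum_range_succ, Nat.factorial] at this
    norm_num at this ⊢
    linarith
  have h1 : (2.7182818283 : ℝ) < Real.exp 1 := Real.exp_one_gt_d9
  have hmul : (4.9505 : ℝ) < Real.exp 1.6 := by
    have : Real.exp 1.6 = Real.exp 1 * Real.exp 0.6 := by
      rw [← Real.exp_add]; norm_num
    rw [this]
    nlinarith [Real.exp_pos (0.6:ℝ)]
  rw [show ((-1.6:ℝ)) = -(1.6:ℝ) by norm_num, Real.exp_neg]
  rw [inv_lt_comm₀ (Real.exp_pos _) (by norm_num)]
  linarith

/-- For any real `ñ₁ ≥ 160` and any integer `T ≥ 2`,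
`G₁(T)·(1 − 1.6/ñ₁)^ñ₁ + 1.6·G₂(T)·(1 − 1.6/ñ₁)^(ñ₁−1) < 6T − 4`, where
`G₁(T) = (1 + 6T) − 7·(0.4751)^(T−1) > 0` and `G₂(T) = (1 + 6T) − 7·(0.7981)^(T−1) > 0`. -/
theorem prop4_necessary_condition_fails (n₁ : ℝ) (hn₁ : 160 ≤ n₁) (T : ℕ) (hT : 2 ≤ T) :
    (0 : ℝ) < (1 + 6 * (T : ℝ)) - 7 * (0.4751 : ℝ) ^ (T - 1) ∧
    (0 : ℝ) < (1 + 6 * (T : ℝ)) - 7 * (0.7981 : ℝ) ^ (T - 1) ∧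
    ((1 + 6 * (T : ℝ)) - 7 * (0.4751 : ℝ) ^ (T - 1)) * (1 - 1.6 / n₁) ^ n₁ +
        1.6 * ((1 + 6 * (T : ℝ)) - 7 * (0.7981 : ℝ) ^ (T - 1)) * (1 - 1.6 / n₁) ^ (n₁ - 1)
      < 6 * (T : ℝ) - 4 := by
  have hT1 : (2:ℝ) ≤ (T:ℝ) := by exact_mod_cast hT
  have h1 : (0.4751:ℝ)^(T-1) ≤ 0.4751 := by
    calc (0.4751:ℝ)^(T-1) ≤ 0.4751^1 :=
          pow_le_pow_of_le_one (by norm_num) (by norm_num) (by omega)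
      _ = 0.4751 := pow_one _
  have h2 : (0.7981:ℝ)^(T-1) ≤ 0.7981 := by
    calc (0.7981:ℝ)^(T-1) ≤ 0.7981^1 :=
          pow_le_pow_of_le_one (by norm_num) (by norm_num) (by omega)
      _ = 0.7981 := pow_one _
  have hp1 : (0:ℝ) < (0.4751:ℝ)^(T-1) := by positivity
  have hp2 : (0:ℝ) < (0.7981:ℝ)^(T-1) := by positivity
  have hG1 : (0:ℝ) < (1 + 6 * (T : ℝ)) - 7 * (0.4751 : ℝ) ^ (T - 1) := by nlinarith
  have hG2 : (0:ℝ) < (1 + 6 * (T : ℝ)) - 7 * (0.7981 : ℝ) ^ (T - 1) := by nlinarith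
  refine ⟨hG1, hG2, ?_⟩
  have hn0 : (0:ℝ) < n₁ := by linarith
  set x := 1 - 1.6/n₁ with hxdef
  have hd : 1.6/n₁ ≤ 0.01 := by rw [div_le_iff₀ hn0]; linarith
  have hd0 : 0 < 1.6/n₁ := by positivity
  have hxl : (0.99:ℝ) ≤ x := by rw [hxdef]; linarith
  have hxpos : (0:ℝ) < x := lt_of_lt_of_le (by norm_num) hxl
  have hlog : Real.log x ≤ -(1.6/n₁) := by
    have := Real.log_le_sub_one_of_pos hxpos
    rw [hxdef] at this ⊢
    linarith
  have hxn : x ^ n₁ ≤ Real.exp (-1.6) := by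
    rw [Real.rpow_def_of_pos hxpos]
    apply Real.exp_le_exp.mpr
    have : Real.log x * n₁ ≤ -(1.6/n₁) * n₁ := by
      apply mul_le_mul_of_nonneg_right hlog (le_of_lt hn0)
    calc Real.log x * n₁ ≤ -(1.6/n₁) * n₁ := this
      _ = -1.6 := by field_simp
  have hxn' : x ^ n₁ < 0.202 := lt_of_le_of_lt hxn exp_neg_16_lt
  have hxn0 : (0:ℝ) ≤ x ^ n₁ := Real.rpow_nonneg (le_of_lt hxpos) _
  have hsplit : x ^ (n₁ - 1) = x ^ n₁ / x := by
    rw [Real.rpow_sub hxpos, Real.rpow_one]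
  have hxn1 : x ^ (n₁ - 1) ≤ 0.202 / 0.99 := by
    rw [hsplit]
    exact div_le_div₀ (by norm_num) (le_of_lt hxn') (by norm_num) hxl
  have hxn10 : (0:ℝ) ≤ x ^ (n₁ - 1) := Real.rpow_nonneg (le_of_lt hxpos) _
  have hG1u : (1 + 6 * (T : ℝ)) - 7 * (0.4751 : ℝ) ^ (T - 1) ≤ 1 + 6 * (T:ℝ) := by linarith
  have hG2u : (1 + 6 * (T : ℝ)) - 7 * (0.7981 : ℝ) ^ (T - 1) ≤ 1 + 6 * (T:ℝ) := by linarith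
  have hb1 : ((1 + 6 * (T : ℝ)) - 7 * (0.4751 : ℝ) ^ (T - 1)) * x ^ n₁
      ≤ (1 + 6 * (T:ℝ)) * 0.202 := by
    apply mul_le_mul hG1u (le_of_lt hxn') hxn0 (by linarith)
  have hb2 : ((1 + 6 * (T : ℝ)) - 7 * (0.7981 : ℝ) ^ (T - 1)) * x ^ (n₁ - 1)
      ≤ (1 + 6 * (T:ℝ)) * (0.202 / 0.99) := by
    apply mul_le_mul hG2u hxn1 hxn10 (by linarith)
  rw [mul_assoc 1.6]
  calc ((1 + 6 * (T : ℝ)) - 7 * (0.4751 : ℝ) ^ (T - 1)) * x ^ n₁ +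
        1.6 * (((1 + 6 * (T : ℝ)) - 7 * (0.7981 : ℝ) ^ (T - 1)) * x ^ (n₁ - 1))
      ≤ (1 + 6 * (T:ℝ)) * 0.202 + 1.6 * ((1 + 6 * (T:ℝ)) * (0.202 / 0.99)) := by
        have := mul_le_mul_of_nonneg_left hb2 (by norm_num : (0:ℝ) ≤ 1.6)
        linarith
    _ < 6 * (T : ℝ) - 4 := by nlinarith
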